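/- Let $m\ge 1$ and let $K\subset\mathbb{R}^n$ be a convex body. Then $\mathrm{vol}_{n(m+1)}(D^{m+1}(K))^m \le \mathrm{vol}_{nm}(D^m(K))^{m+1}$; equivalently, $S_{n,m+1}(K)^m\le S_{n,m}(K)^{m+1}$ where $S_{n,m}(K)=\mathrm{vol}_{nm}(D^m(K))\,\mathrm{vol}_n(K)^{-m}$. -/

import Mathlib

open MeasureTheory Pointwise

noncomputable abbrev E (n : ℕ) := EuclideanSpace ℝ (Fin n)

/-- The `m`th-order difference body of a convex body `K ⊂ ℝⁿ`. -/
def Dm (n m : ℕ) (K : Set (E n)) : Set (Fin m → E n) :=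
  {x | (K ∩ ⋂ i, (x i +ᵥ K)).Nonempty}

section LoomisWhitney

open Finset ENNReal

variable {α : Type*} [MeasurableSpace α] (μ : Measure α) [SigmaFinite μ]

private lemma measurable_consMap (t : α) (k : ℕ) :
    Measurable fun z : Fin k → α => (Fin.cons t z : Fin (k + 1) → α) :=
  measurable_pi_lambda _ fun r => by
    refine Fin.cases ?_ (fun s => ?_) r
    · simpa using measurable_const
    · simpa using measurable_pi_apply s

private lemma measurable_consMap2 (k : ℕ) :
    Measurable fun p : α × (Fin k → α) => (Fin.cons p.1 p.2 : Fin (k + 1) → α) :=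
  measurable_pi_lambda _ fun r => by
    refine Fin.cases ?_ (fun s => ?_) r
    · simpa using measurable_fst
    · simp only [Fin.cons_succ]
      exact (measurable_pi_apply s).comp measurable_snd

private lemma measurable_comp_succAbove {k : ℕ} (j : Fin (k + 1)) :
    Measurable fun x : Fin (k + 1) → α => x ∘ j.succAbove :=
  measurable_pi_lambda _ fun i => measurable_pi_apply _

/-- Fubini for the pi measure, splitting off the `0`-th coordinate. -/
private lemma lintegral_cons {k : ℕ} (F : (Fin (k + 1) → α) → ℝ≥0∞) (hF : Measurable F) :
    ∫⁻ x, F x ∂(Measure.pi fun _ : Fin (k + 1) => μ)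
      = ∫⁻ t, ∫⁻ y, F (Fin.cons t y) ∂(Measure.pi fun _ : Fin k => μ) ∂μ := by
  have h := (measurePreserving_piFinSuccAbove (fun _ : Fin (k + 1) => μ) 0).symm
  have hcons_eq : (⇑(MeasurableEquiv.piFinSuccAbove (fun _ : Fin (k + 1) => α) 0).symm)
      = fun z : α × (Fin k → α) => (Fin.cons z.1 z.2 : Fin (k + 1) → α) := by
    funext z
    show (Fin.insertNthEquiv (fun _ => α) 0) z = _
    simp [Fin.insertNthEquiv, Fin.insertNth_zero']
  rw [hcons_eq] at h
  calc
    ∫⁻ x, F x ∂(Measure.pi fun _ : Fin (k + 1) => μ)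
      = ∫⁻ z : α × (Fin k → α), F (Fin.cons z.1 z.2)
          ∂(μ.prod (Measure.pi fun _ : Fin k => μ)) := (h.lintegral_comp hF).symm
    _ = ∫⁻ t, ∫⁻ y, F (Fin.cons t y) ∂(Measure.pi fun _ : Fin k => μ) ∂μ :=
        lintegral_prod _ ((hF.comp (measurable_consMap2 k)).aemeasurable)

private lemma cons_comp_zero {k : ℕ} (t : α) (y : Fin (k + 1) → α) :
    (Fin.cons t y : Fin (k + 2) → α) ∘ (0 : Fin (k + 2)).succAbove = y := by
  funext i
  simp [Fin.zero_succAbove]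

private lemma cons_comp_succ {k : ℕ} (t : α) (y : Fin (k + 1) → α) (i : Fin (k + 1)) :
    (Fin.cons t y : Fin (k + 2) → α) ∘ (i.succ).succAbove
      = Fin.cons t (y ∘ i.succAbove) := by
  funext r
  refine Fin.cases ?_ (fun s => ?_) r
  · simp
  · simp [Fin.succ_succAbove_succ]

/-- The functional (Hölder/Finner type) form of the Loomis–Whitney inequality. -/
private theorem lw_lintegral : ∀ k : ℕ, 1 ≤ k →
    ∀ f : Fin (k + 1) → (Fin k → α) → ℝ≥0∞, (∀ j, Measurable (f j)) →
    ∫⁻ x, ∏ j, f j (x ∘ j.succAbove) ^ ((k : ℝ)⁻¹)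
        ∂(Measure.pi fun _ : Fin (k + 1) => μ)
      ≤ ∏ j, (∫⁻ y, f j y ∂(Measure.pi fun _ : Fin k => μ)) ^ ((k : ℝ)⁻¹) := by
  refine Nat.le_induction ?_ ?_
  · -- base case `k = 1`
    intro f hf
    simp only [Nat.cast_one, inv_one, ENNReal.rpow_one]
    have hF : Measurable fun x : Fin 2 → α => ∏ j, f j (x ∘ j.succAbove) :=
      Finset.measurable_prod _ fun j _ => (hf j).comp (measurable_comp_succAbove j)
    rw [lintegral_cons μ _ hF]
    have key : ∀ (t : α) (y : Fin 1 → α),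
        (∏ j : Fin 2, f j ((Fin.cons t y : Fin 2 → α) ∘ j.succAbove))
          = f 0 y * f 1 (fun _ => t) := by
      intro t y
      have e1 : (Fin.cons t y : Fin 2 → α) ∘ (1 : Fin 2).succAbove
          = fun _ : Fin 1 => t := by
        funext i
        have hi : i = 0 := Subsingleton.elim _ _
        subst hi
        show (Fin.cons t y : Fin 2 → α) ((1 : Fin 2).succAbove 0) = t
        have h10 : (1 : Fin 2).succAbove 0 = 0 := by decide
        rw [h10, Fin.cons_zero]
      rw [Fin.prod_univ_two, cons_comp_zero t y, e1]
    simp_rw [key]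
    have h1 : ∀ t : α, ∫⁻ y, f 0 y * f 1 (fun _ => t)
          ∂(Measure.pi fun _ : Fin 1 => μ)
        = (∫⁻ y, f 0 y ∂(Measure.pi fun _ : Fin 1 => μ)) * f 1 (fun _ => t) := fun t =>
      lintegral_mul_const _ (hf 0)
    simp_rw [h1]
    rw [lintegral_const_mul _ (show Measurable fun t : α => f 1 (fun _ => t) from
      (hf 1).comp (measurable_pi_lambda _ fun _ => measurable_id))]
    have h2 : ∫⁻ t, f 1 (fun _ => t) ∂μ
        = ∫⁻ y, f 1 y ∂(Measure.pi fun _ : Fin 1 => μ) := by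
      have h := (measurePreserving_funUnique μ (Fin 1)).symm
      exact h.lintegral_comp (hf 1)
    rw [h2, Fin.prod_univ_two]
  · -- inductive step
    intro k hk ih f hf
    have hk0 : (k : ℝ) ≠ 0 := Nat.cast_ne_zero.2 (by omega)
    have hk1 : (0 : ℝ) < (k : ℝ) + 1 := by positivity
    set q : ℝ := ((k : ℝ) + 1)⁻¹ with hq_def
    have hq_cast : ((k + 1 : ℕ) : ℝ)⁻¹ = q := by push_cast; rfl
    have hq_nonneg : 0 ≤ q := by positivity
    have hkq_nonneg : 0 ≤ (k : ℝ) * q := by positivity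
    have hsum : q + (k : ℝ) * q = 1 := by
      rw [hq_def]; field_simp; ring
    have hqq : ∀ a : ℝ≥0∞, (a ^ ((k : ℝ)⁻¹)) ^ ((k : ℝ) * q) = a ^ q := by
      intro a
      rw [← ENNReal.rpow_mul]
      congr 1
      field_simp
    simp only [hq_cast]
    -- measurability helpers
    have hmeas_inner : ∀ t : α, ∀ i : Fin (k + 1),
        Measurable fun z : Fin k → α => f i.succ (Fin.cons t z) :=
      fun t i => (hf i.succ).comp (measurable_consMap t k)
    have hmeas_h : ∀ i : Fin (k + 1),
        Measurable fun t : α => ∫⁻ z, f i.succ (Fin.cons t z)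
          ∂(Measure.pi fun _ : Fin k => μ) := by
      intro i
      apply Measurable.lintegral_prod_right
      exact (hf i.succ).comp (measurable_consMap2 k)
    have hF : Measurable fun x : Fin (k + 2) → α =>
        ∏ j, f j (x ∘ j.succAbove) ^ q :=
      Finset.measurable_prod _ fun j _ =>
        ((hf j).comp (measurable_comp_succAbove j)).pow_const _
    rw [lintegral_cons μ _ hF]
    have hsplit : ∀ (t : α) (y : Fin (k + 1) → α),
        (∏ j : Fin (k + 2), f j ((Fin.cons t y : Fin (k + 2) → α) ∘ j.succAbove) ^ q)
          = f 0 y ^ q * ∏ i : Fin (k + 1), f i.succ (Fin.cons t (y ∘ i.succAbove)) ^ q := by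
      intro t y
      rw [Fin.prod_univ_succ, cons_comp_zero]
      congr 1
      exact Finset.prod_congr rfl fun i _ => by rw [cons_comp_succ]
    simp_rw [hsplit]
    have inner_le : ∀ t : α,
        ∫⁻ y, f 0 y ^ q * ∏ i : Fin (k + 1), f i.succ (Fin.cons t (y ∘ i.succAbove)) ^ q
            ∂(Measure.pi fun _ : Fin (k + 1) => μ)
          ≤ (∫⁻ y, f 0 y ∂(Measure.pi fun _ : Fin (k + 1) => μ)) ^ q
            * ∏ i : Fin (k + 1),
                (∫⁻ z, f i.succ (Fin.cons t z) ∂(Measure.pi fun _ : Fin k => μ)) ^ q := by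
      intro t
      have step1 : ∀ y : Fin (k + 1) → α,
          (∏ i : Fin (k + 1), f i.succ (Fin.cons t (y ∘ i.succAbove)) ^ q)
            = (∏ i : Fin (k + 1),
                f i.succ (Fin.cons t (y ∘ i.succAbove)) ^ ((k : ℝ)⁻¹)) ^ ((k : ℝ) * q) := by
        intro y
        rw [← ENNReal.prod_rpow_of_nonneg hkq_nonneg]
        exact Finset.prod_congr rfl fun i _ => (hqq _).symm
      simp_rw [step1]
      calc
        ∫⁻ y, f 0 y ^ q * (∏ i : Fin (k + 1),
              f i.succ (Fin.cons t (y ∘ i.succAbove)) ^ ((k : ℝ)⁻¹)) ^ ((k : ℝ) * q)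
            ∂(Measure.pi fun _ : Fin (k + 1) => μ)
          ≤ (∫⁻ y, f 0 y ∂(Measure.pi fun _ : Fin (k + 1) => μ)) ^ q
            * (∫⁻ y, ∏ i : Fin (k + 1),
                f i.succ (Fin.cons t (y ∘ i.succAbove)) ^ ((k : ℝ)⁻¹)
              ∂(Measure.pi fun _ : Fin (k + 1) => μ)) ^ ((k : ℝ) * q) := by
            refine ENNReal.lintegral_mul_norm_pow_le (hf 0).aemeasurable
              ?_ hq_nonneg hkq_nonneg hsum
            exact (Finset.measurable_prod _ fun i _ =>
              ((hmeas_inner t i).comp (measurable_comp_succAbove i)).pow_const _).aemeasurable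
        _ ≤ (∫⁻ y, f 0 y ∂(Measure.pi fun _ : Fin (k + 1) => μ)) ^ q
            * ((∏ i : Fin (k + 1),
                (∫⁻ z, f i.succ (Fin.cons t z)
                  ∂(Measure.pi fun _ : Fin k => μ)) ^ ((k : ℝ)⁻¹))) ^ ((k : ℝ) * q) := by
            refine mul_le_mul_right (ENNReal.rpow_le_rpow ?_ hkq_nonneg) _
            exact ih (fun i z => f i.succ (Fin.cons t z)) (fun i => hmeas_inner t i)
        _ = (∫⁻ y, f 0 y ∂(Measure.pi fun _ : Fin (k + 1) => μ)) ^ q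
            * ∏ i : Fin (k + 1),
                (∫⁻ z, f i.succ (Fin.cons t z) ∂(Measure.pi fun _ : Fin k => μ)) ^ q := by
            congr 1
            rw [← ENNReal.prod_rpow_of_nonneg hkq_nonneg]
            exact Finset.prod_congr rfl fun i _ => hqq _
    calc
      ∫⁻ t, ∫⁻ y, f 0 y ^ q * ∏ i : Fin (k + 1),
            f i.succ (Fin.cons t (y ∘ i.succAbove)) ^ q
          ∂(Measure.pi fun _ : Fin (k + 1) => μ) ∂μ
        ≤ ∫⁻ t, (∫⁻ y, f 0 y ∂(Measure.pi fun _ : Fin (k + 1) => μ)) ^ q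
            * ∏ i : Fin (k + 1),
                (∫⁻ z, f i.succ (Fin.cons t z) ∂(Measure.pi fun _ : Fin k => μ)) ^ q ∂μ :=
          lintegral_mono inner_le
      _ = (∫⁻ y, f 0 y ∂(Measure.pi fun _ : Fin (k + 1) => μ)) ^ q
          * ∫⁻ t, ∏ i : Fin (k + 1),
              (∫⁻ z, f i.succ (Fin.cons t z) ∂(Measure.pi fun _ : Fin k => μ)) ^ q ∂μ :=
          lintegral_const_mul _
            (Finset.measurable_prod _ fun i _ => (hmeas_h i).pow_const _)
      _ ≤ (∫⁻ y, f 0 y ∂(Measure.pi fun _ : Fin (k + 1) => μ)) ^ q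
          * ∏ i : Fin (k + 1),
              (∫⁻ t, ∫⁻ z, f i.succ (Fin.cons t z)
                ∂(Measure.pi fun _ : Fin k => μ) ∂μ) ^ q := by
          refine mul_le_mul_right ?_ _
          refine ENNReal.lintegral_prod_norm_pow_le Finset.univ
            (fun i _ => (hmeas_h i).aemeasurable) ?_ (fun i _ => hq_nonneg)
          rw [Finset.sum_const, Finset.card_univ, Fintype.card_fin, nsmul_eq_mul, hq_def]
          push_cast
          field_simp
      _ = ∏ j : Fin (k + 2), (∫⁻ y, f j y ∂(Measure.pi fun _ : Fin (k + 1) => μ)) ^ q := by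
          conv_rhs => rw [Fin.prod_univ_succ]
          congr 1
          refine Finset.prod_congr rfl fun i _ => ?_
          rw [← lintegral_cons μ _ (hf i.succ)]

/-- The set-theoretic Loomis–Whitney inequality: if all the "delete one coordinate"
projections of `S` are contained in the `T j`, then `μ(S)^k ≤ ∏ μ(T j)`. -/
private theorem lw_sets (k : ℕ) (hk : 1 ≤ k) (S : Set (Fin (k + 1) → α))
    (hS : MeasurableSet S) (T : Fin (k + 1) → Set (Fin k → α))
    (hT : ∀ j, MeasurableSet (T j))
    (hST : ∀ j, ∀ x ∈ S, x ∘ j.succAbove ∈ T j) :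
    (Measure.pi fun _ : Fin (k + 1) => μ) S ^ k
      ≤ ∏ j, (Measure.pi fun _ : Fin k => μ) (T j) := by
  have hk0 : (k : ℝ) ≠ 0 := Nat.cast_ne_zero.2 (by omega)
  have key : (Measure.pi fun _ : Fin (k + 1) => μ) S
      ≤ ∏ j, ((Measure.pi fun _ : Fin k => μ) (T j)) ^ ((k : ℝ)⁻¹) := by
    have h1 : (Measure.pi fun _ : Fin (k + 1) => μ) S
        = ∫⁻ x, S.indicator (1 : (Fin (k + 1) → α) → ℝ≥0∞) x
            ∂(Measure.pi fun _ : Fin (k + 1) => μ) :=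
      (lintegral_indicator_one hS).symm
    rw [h1]
    have h2 : ∫⁻ x, S.indicator (1 : (Fin (k + 1) → α) → ℝ≥0∞) x
          ∂(Measure.pi fun _ : Fin (k + 1) => μ)
        ≤ ∫⁻ x, ∏ j, ((T j).indicator (1 : (Fin k → α) → ℝ≥0∞) (x ∘ j.succAbove)) ^ ((k : ℝ)⁻¹)
          ∂(Measure.pi fun _ : Fin (k + 1) => μ) := by
      refine lintegral_mono fun x => ?_
      by_cases hx : x ∈ S
      · rw [Set.indicator_of_mem hx]
        refine le_of_eq ?_
        refine (Finset.prod_eq_one fun j _ => ?_).symm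
        rw [Set.indicator_of_mem (hST j x hx), Pi.one_apply, ENNReal.one_rpow]
      · rw [Set.indicator_of_notMem hx]
        exact zero_le
    refine h2.trans ?_
    have h3 := lw_lintegral μ k hk
      (fun j => (T j).indicator (1 : (Fin k → α) → ℝ≥0∞))
      (fun j => (measurable_one.indicator (hT j)))
    refine h3.trans ?_
    refine le_of_eq (Finset.prod_congr rfl fun j _ => ?_)
    rw [lintegral_indicator_one (hT j)]
  calc
    (Measure.pi fun _ : Fin (k + 1) => μ) S ^ k
      = ((Measure.pi fun _ : Fin (k + 1) => μ) S) ^ ((k : ℕ) : ℝ) := by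
        rw [ENNReal.rpow_natCast]
    _ ≤ (∏ j, ((Measure.pi fun _ : Fin k => μ) (T j)) ^ ((k : ℝ)⁻¹)) ^ ((k : ℕ) : ℝ) :=
        ENNReal.rpow_le_rpow key (by positivity)
    _ = ∏ j, (Measure.pi fun _ : Fin k => μ) (T j) := by
        rw [← ENNReal.prod_rpow_of_nonneg (by positivity : (0 : ℝ) ≤ ((k : ℕ) : ℝ))]
        refine Finset.prod_congr rfl fun j _ => ?_
        rw [← ENNReal.rpow_mul, inv_mul_cancel₀ hk0, ENNReal.rpow_one]

end LoomisWhitney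

/-- `Dm n m K` is the image of the compact set `K ×ˢ Kᵐ` under a continuous map,
hence compact. -/
theorem isCompact_Dm (n m : ℕ) {K : Set (E n)} (hK : IsCompact K) :
    IsCompact (Dm n m K) := by
  have himg : Dm n m K
      = (fun p : E n × (Fin m → E n) => fun i => p.1 - p.2 i) ''
          (K ×ˢ Set.univ.pi fun _ : Fin m => K) := by
    ext x
    constructor
    · rintro ⟨y, hy⟩
      have hy1 : y ∈ K := hy.1
      have hy2 : ∀ i, y ∈ x i +ᵥ K := fun i => Set.mem_iInter.1 hy.2 i
      have h3 : ∀ i, ∃ b, b ∈ K ∧ x i +ᵥ b = y := fun i => Set.mem_vadd_set.mp (hy2 i)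
      choose z hz1 hz2 using h3
      refine ⟨(y, z), ⟨hy1, fun i _ => hz1 i⟩, ?_⟩
      funext i
      have := hz2 i
      rw [vadd_eq_add] at this
      simp only
      rw [← this]
      abel
    · rintro ⟨⟨y, z⟩, ⟨hyK, hz⟩, rfl⟩
      refine ⟨y, hyK, Set.mem_iInter.2 fun i => ?_⟩
      refine Set.mem_vadd_set.2 ⟨z i, hz i (Set.mem_univ i), ?_⟩
      rw [vadd_eq_add]
      exact sub_add_cancel _ _
  rw [himg]
  have hcpt : IsCompact (K ×ˢ Set.univ.pi fun _ : Fin m => K) :=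
    hK.prod (isCompact_univ_pi fun _ => hK)
  exact hcpt.image <| continuous_pi fun i =>
    continuous_fst.sub ((continuous_apply i).comp continuous_snd)

/-- Monotonicity in `m`: `vol(D^{m+1}K)^m ≤ vol(DᵐK)^{m+1}`, equivalently
`S_{n,m+1}(K)^m ≤ S_{n,m}(K)^{m+1}`. -/
theorem stmt19 (n m : ℕ) (hm : 1 ≤ m) (K : Set (E n))
    (hKcpt : IsCompact K) (hKcvx : Convex ℝ K) (hKint : (interior K).Nonempty) :
    (volume (Dm n (m + 1) K)) ^ m ≤ (volume (Dm n m K)) ^ (m + 1) := by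
  have hS : MeasurableSet (Dm n (m + 1) K) :=
    (isCompact_Dm n (m + 1) hKcpt).isClosed.measurableSet
  have hT : MeasurableSet (Dm n m K) :=
    (isCompact_Dm n m hKcpt).isClosed.measurableSet
  have hST : ∀ j : Fin (m + 1), ∀ x ∈ Dm n (m + 1) K,
      x ∘ j.succAbove ∈ Dm n m K := by
    rintro j x ⟨y, hy⟩
    exact ⟨y, hy.1, Set.mem_iInter.2 fun i => Set.mem_iInter.1 hy.2 (j.succAbove i)⟩
  have key := lw_sets (volume : Measure (E n)) m hm (Dm n (m + 1) K) hS
    (fun _ => Dm n m K) (fun _ => hT) hST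
  simp only [Finset.prod_const, Finset.card_univ, Fintype.card_fin] at key
  rw [volume_pi, volume_pi]
  exact key
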